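/- Let β(n) = √(c·L / max{1, n}) for constants c, L > 0, and let (s_t,a_t), t=1,...,T be a sequence in a finite set S×A grouped into m episodes of length τ with counts N_{t_k}. Then ∑_{k=1}^m ∑_{i=1}^τ min{β(N_{t_k}(s_{t_k+i-1}, a_{t_k+i-1})), 1} ≤ 2τ|S||A| + 2√(2cL·|S||A|·T). -/

import Mathlib

open Finset

/-- `visits sa t p` is the number of times `t' < t` (times are 1-indexed) at which
the state-action pair `p` was sampled. -/
def visits {S A : Type*} [DecidableEq S] [DecidableEq A]
    (sa : ℕ → S × A) (t : ℕ) (p : S × A) : ℕ :=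
  ((Finset.Ico 1 t).filter (fun t' => sa t' = p)).card

section Aux

variable {S A : Type*} [DecidableEq S] [DecidableEq A] (sa : ℕ → S × A)

lemma visits_mono {t t' : ℕ} (h : t ≤ t') (p : S × A) :
    visits sa t p ≤ visits sa t' p :=
  Finset.card_le_card (Finset.filter_subset_filter _ (Finset.Ico_subset_Ico le_rfl h))

lemma visits_le_card (t : ℕ) (p : S × A) : visits sa t p ≤ t - 1 := by
  unfold visits
  calc _ ≤ (Finset.Ico 1 t).card := Finset.card_le_card (Finset.filter_subset _ _)
    _ = t - 1 := Nat.card_Ico 1 t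

lemma visits_le_add {t t' : ℕ} (h : t ≤ t') (p : S × A) :
    visits sa t' p ≤ visits sa t p + (t' - t) := by
  rcases le_or_gt 1 t with h1 | h1
  · unfold visits
    rw [← Finset.Ico_union_Ico_eq_Ico h1 h, Finset.filter_union]
    calc _ ≤ _ := Finset.card_union_le _ _
    _ ≤ _ := by
        gcongr
        calc ((Finset.Ico t t').filter _).card ≤ (Finset.Ico t t').card :=
              Finset.card_le_card (Finset.filter_subset _ _)
          _ = t' - t := Nat.card_Ico t t'
  · have := visits_le_card sa t' p
    omega

lemma visits_succ_of_eq {t : ℕ} (ht : 1 ≤ t) {p : S × A} (hp : sa t = p) :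
    visits sa (t + 1) p = visits sa t p + 1 := by
  unfold visits
  rw [← Finset.Ico_union_Ico_eq_Ico ht (Nat.le_succ t), Finset.filter_union,
    Finset.card_union_of_disjoint]
  · congr 1
    have : Finset.Ico t (t+1) = {t} := by
      rw [Finset.Ico_add_one_right_eq_Icc, Finset.Icc_self]
    rw [this, Finset.filter_singleton, if_pos hp, Finset.card_singleton]
  · exact Finset.disjoint_filter_filter (Finset.Ico_disjoint_Ico_consecutive 1 t (t+1))

lemma visits_lt_of_lt {t t' : ℕ} (ht : 1 ≤ t) (h : t < t') {p : S × A} (hp : sa t = p) :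
    visits sa t p < visits sa t' p := by
  have h1 := visits_succ_of_eq sa ht hp
  have h2 : visits sa (t+1) p ≤ visits sa t' p := visits_mono sa h p
  omega

lemma sum_one_div_sqrt (n : ℕ) :
    ∑ j ∈ Finset.range n, (1:ℝ) / Real.sqrt (j + 1) ≤ 2 * Real.sqrt n := by
  induction n with
  | zero => simp
  | succ n ih =>
    rw [Finset.sum_range_succ]
    have hs : Real.sqrt n ≤ Real.sqrt (n+1) := by
      apply Real.sqrt_le_sqrt; push_cast; linarith
    have hpos : (0:ℝ) < Real.sqrt (n+1) := by
      apply Real.sqrt_pos.2; positivity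
    have key : (1:ℝ) / Real.sqrt (n+1) ≤ 2 * Real.sqrt (n+1) - 2 * Real.sqrt n := by
      rw [div_le_iff₀ hpos]
      have h1 : Real.sqrt n * Real.sqrt (n+1) ≥ Real.sqrt n * Real.sqrt n := by
        apply mul_le_mul_of_nonneg_left hs (Real.sqrt_nonneg _)
      have h2 : Real.sqrt n * Real.sqrt n = (n:ℝ) := Real.mul_self_sqrt (by positivity)
      have h3 : Real.sqrt (n+1) * Real.sqrt (n+1) = (n:ℝ)+1 := Real.mul_self_sqrt (by positivity)
      nlinarith
    push_cast
    linarith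

lemma sum_inv_sqrt_visits [Fintype S] [Fintype A] (T : ℕ) :
    ∑ t ∈ Finset.Icc 1 T, (1:ℝ) / Real.sqrt (visits sa t (sa t) + 1)
      ≤ 2 * Real.sqrt ((Fintype.card S * Fintype.card A) * T) := by
  classical
  set n : S × A → ℕ := fun p => visits sa (T + 1) p with hn
  have hfib : ∀ x ∈ Finset.Icc 1 T, sa x ∈ (Finset.univ : Finset (S × A)) :=
    fun x _ => Finset.mem_univ _
  rw [← Finset.sum_fiberwise_of_maps_to hfib]
  have step1 : ∀ p : S × A,
      ∑ t ∈ (Finset.Icc 1 T).filter (fun t => sa t = p),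
        (1:ℝ) / Real.sqrt (visits sa t (sa t) + 1) ≤ 2 * Real.sqrt (n p) := by
    intro p
    have hcong : ∑ t ∈ (Finset.Icc 1 T).filter (fun t => sa t = p),
        (1:ℝ) / Real.sqrt (visits sa t (sa t) + 1)
        = ∑ t ∈ (Finset.Icc 1 T).filter (fun t => sa t = p),
        (1:ℝ) / Real.sqrt (visits sa t p + 1) := by
      refine Finset.sum_congr rfl fun t ht => ?_
      rw [(Finset.mem_filter.1 ht).2]
    rw [hcong]
    have hinj : ∀ x ∈ (Finset.Icc 1 T).filter (fun t => sa t = p),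
        ∀ y ∈ (Finset.Icc 1 T).filter (fun t => sa t = p),
        visits sa x p = visits sa y p → x = y := by
      intro x hx y hy hxy
      simp only [Finset.mem_filter, Finset.mem_Icc] at hx hy
      by_contra hne
      rcases lt_or_gt_of_ne hne with h | h
      · exact absurd hxy (Nat.ne_of_lt (visits_lt_of_lt sa hx.1.1 h hx.2))
      · exact absurd hxy.symm (Nat.ne_of_lt (visits_lt_of_lt sa hy.1.1 h hy.2))
    rw [show ∑ t ∈ (Finset.Icc 1 T).filter (fun t => sa t = p),
        (1:ℝ) / Real.sqrt (visits sa t p + 1)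
        = ∑ j ∈ ((Finset.Icc 1 T).filter (fun t => sa t = p)).image
            (fun t => visits sa t p), (1:ℝ) / Real.sqrt (j + 1) from
      (Finset.sum_image (f := fun j : ℕ => (1:ℝ) / Real.sqrt ((j:ℝ) + 1)) hinj).symm]
    have hsub : ((Finset.Icc 1 T).filter (fun t => sa t = p)).image (fun t => visits sa t p)
        ⊆ Finset.range (n p) := by
      intro j hj
      simp only [Finset.mem_image, Finset.mem_filter, Finset.mem_Icc] at hj
      obtain ⟨t, ⟨⟨ht1, ht2⟩, htp⟩, rfl⟩ := hj
      rw [Finset.mem_range, hn]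
      calc visits sa t p < visits sa (t+1) p := by
            rw [visits_succ_of_eq sa ht1 htp]; omega
        _ ≤ visits sa (T+1) p := visits_mono sa (by omega) p
    calc _ ≤ ∑ j ∈ Finset.range (n p), (1:ℝ) / Real.sqrt (j + 1) :=
          Finset.sum_le_sum_of_subset_of_nonneg hsub (fun j _ _ => by positivity)
      _ ≤ 2 * Real.sqrt (n p) := sum_one_div_sqrt (n p)
  calc ∑ p : S × A, ∑ t ∈ (Finset.Icc 1 T).filter (fun t => sa t = p),
        (1:ℝ) / Real.sqrt (visits sa t (sa t) + 1)
      ≤ ∑ p : S × A, 2 * Real.sqrt (n p) := Finset.sum_le_sum fun p _ => step1 p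
    _ = 2 * ∑ p : S × A, Real.sqrt (n p) := by rw [Finset.mul_sum]
    _ ≤ 2 * Real.sqrt ((Fintype.card S * Fintype.card A) * T) := by
        gcongr 2 * ?_
        have hsq : (∑ p : S × A, Real.sqrt (n p)) ^ 2
            ≤ ((Fintype.card S * Fintype.card A : ℕ) : ℝ) * ∑ p : S × A, (n p : ℝ) := by
          have := sq_sum_le_card_mul_sum_sq (s := (Finset.univ : Finset (S × A)))
            (f := fun p => Real.sqrt (n p))
          simpa [Real.sq_sqrt, Finset.card_univ, Fintype.card_prod] using this
        have hsum : ∑ p : S × A, (n p : ℝ) = (T : ℝ) := by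
          have hc := Finset.card_eq_sum_card_fiberwise
            (f := sa) (s := Finset.Ico 1 (T+1)) (t := Finset.univ)
            (fun x _ => Finset.mem_univ _)
          have : (Finset.Ico 1 (T+1)).card = T := by rw [Nat.card_Ico]; omega
          rw [this] at hc
          rw [← Nat.cast_sum]
          norm_cast
          simpa [hn, visits] using hc.symm
        rw [hsum] at hsq
        refine Real.le_sqrt_of_sq_le ?_
        calc (∑ p : S × A, Real.sqrt (n p)) ^ 2 ≤ _ := hsq
          _ ≤ ((Fintype.card S * Fintype.card A : ℕ) : ℝ) * (T:ℝ) := le_rfl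
          _ = _ := by push_cast; ring

end Aux

/-- Sum of truncated confidence widths `min(β(N_{t_k}(s_t,a_t)), 1)` with
`β(n) = √(cL / max(1,n))`, over m episodes of length τ (T = mτ), is at most
`2τ|S||A| + 2√(2cL|S||A|T)`. -/
theorem stmt15 {S A : Type*} [Fintype S] [Fintype A] [DecidableEq S] [DecidableEq A]
    (sa : ℕ → S × A) (τ m : ℕ) (hτ : 0 < τ) (c L : ℝ) (hc : 0 < c) (hL : 0 < L) :
    ∑ k ∈ Finset.Icc 1 m, ∑ i ∈ Finset.Icc 1 τ,
        min (Real.sqrt (c * L /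
          (max 1 (visits sa ((k - 1) * τ + 1) (sa ((k - 1) * τ + 1 + i - 1))) : ℕ))) 1
      ≤ 2 * τ * Fintype.card S * Fintype.card A
        + 2 * Real.sqrt (2 * c * L * Fintype.card S * Fintype.card A * (m * τ)) := by
  classical
  set T := m * τ with hT
  set ep : ℕ → ℕ := fun t => ((t - 1) / τ) * τ + 1 with hep
  set F : ℕ → ℝ := fun t =>
    min (Real.sqrt (c * L / (max 1 (visits sa (ep t) (sa t)) : ℕ))) 1 with hF
  have hcL : (0:ℝ) < c * L := mul_pos hc hL
  -- Step A : reindex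
  have stepA : ∑ k ∈ Finset.Icc 1 m, ∑ i ∈ Finset.Icc 1 τ,
      min (Real.sqrt (c * L /
        (max 1 (visits sa ((k - 1) * τ + 1) (sa ((k - 1) * τ + 1 + i - 1))) : ℕ))) 1
      = ∑ t ∈ Finset.Icc 1 T, F t := by
    rw [← Finset.sum_product']
    refine Finset.sum_nbij' (fun p => (p.1 - 1) * τ + p.2)
      (fun t => ((t - 1) / τ + 1, (t - 1) % τ + 1)) ?_ ?_ ?_ ?_ ?_
    · rintro ⟨k, i⟩ hk
      simp only [Finset.mem_product, Finset.mem_Icc] at hk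
      simp only [Finset.mem_Icc]
      constructor
      · omega
      · calc (k-1)*τ + i ≤ (m-1)*τ + τ :=
              add_le_add (Nat.mul_le_mul_right τ (by omega)) hk.2.2
          _ = m * τ := by
              have e1 : (m-1)*τ = m*τ - τ := Nat.sub_one_mul m τ
              have e2 : τ ≤ m*τ := Nat.le_mul_of_pos_left τ (by omega)
              omega
    · intro t ht
      simp only [Finset.mem_Icc] at ht
      simp only [Finset.mem_product, Finset.mem_Icc]
      have hlt : (t - 1) / τ < m := by
        apply Nat.div_lt_of_lt_mul
        rw [Nat.mul_comm]
        omega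
      have hm := Nat.mod_lt (t-1) hτ
      exact ⟨⟨Nat.le_add_left _ _, by omega⟩, Nat.le_add_left _ _, by omega⟩
    · rintro ⟨k, i⟩ hk
      simp only [Finset.mem_product, Finset.mem_Icc] at hk
      have h1 : ((k-1)*τ + i - 1) / τ = k - 1 := by
        have : (k-1)*τ + i - 1 = (i-1) + (k-1)*τ := by omega
        rw [this, Nat.add_mul_div_right _ _ hτ, Nat.div_eq_of_lt (by omega)]
        omega
      have h2 : ((k-1)*τ + i - 1) % τ = i - 1 := by
        have : (k-1)*τ + i - 1 = (i-1) + (k-1)*τ := by omega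
        rw [this, Nat.add_mul_mod_self_right, Nat.mod_eq_of_lt (by omega)]
      simp only [h1, h2]
      ext <;> simp <;> omega
    · intro t ht
      simp only [Finset.mem_Icc] at ht
      simp only [Nat.add_sub_cancel]
      have := Nat.div_add_mod (t-1) τ
      have hcomm : ((t-1)/τ) * τ = τ * ((t-1)/τ) := Nat.mul_comm _ _
      omega
    · rintro ⟨k, i⟩ hk
      simp only [Finset.mem_product, Finset.mem_Icc] at hk
      have h1 : ((k-1)*τ + i - 1) / τ = k - 1 := by
        have : (k-1)*τ + i - 1 = (i-1) + (k-1)*τ := by omega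
        rw [this, Nat.add_mul_div_right _ _ hτ, Nat.div_eq_of_lt (by omega)]
        omega
      have h2 : (k-1)*τ + 1 + i - 1 = (k-1)*τ + i := by omega
      simp only [hF, hep, h1, h2]
  rw [stepA]
  -- notation
  set C := Fintype.card S * Fintype.card A with hC
  have hept : ∀ t, 1 ≤ t → ep t ≤ t ∧ t - ep t < τ := by
    intro t ht
    have hdm := Nat.div_add_mod (t-1) τ
    have hmod := Nat.mod_lt (t-1) hτ
    have hcomm : ((t-1)/τ) * τ = τ * ((t-1)/τ) := Nat.mul_comm _ _
    constructor <;> simp only [hep] <;> omega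
  -- split
  rw [← Finset.sum_filter_add_sum_filter_not (Finset.Icc 1 T)
    (fun t => visits sa (ep t) (sa t) < τ)]
  have bound1 : ∑ t ∈ (Finset.Icc 1 T).filter (fun t => visits sa (ep t) (sa t) < τ), F t
      ≤ ((C * (2 * τ) : ℕ) : ℝ) := by
    calc _ ≤ ∑ _t ∈ (Finset.Icc 1 T).filter (fun t => visits sa (ep t) (sa t) < τ), (1:ℝ) :=
          Finset.sum_le_sum fun t _ => min_le_right _ _
      _ = (((Finset.Icc 1 T).filter (fun t => visits sa (ep t) (sa t) < τ)).card : ℝ) := by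
          simp
      _ ≤ _ := by
          have hcard : ((Finset.Icc 1 T).filter (fun t => visits sa (ep t) (sa t) < τ)).card
              ≤ C * (2 * τ) := by
            have := Finset.card_le_card_of_injOn
              (f := fun t => (sa t, visits sa t (sa t)))
              (s := (Finset.Icc 1 T).filter (fun t => visits sa (ep t) (sa t) < τ))
              (t := (Finset.univ : Finset (S × A)) ×ˢ Finset.range (2 * τ))
              ?_ ?_
            · calc _ ≤ _ := this
                _ = C * (2 * τ) := by
                  rw [Finset.card_product, Finset.card_range, Finset.card_univ,
                    Fintype.card_prod]
            · intro t ht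
              simp only [Finset.mem_coe, Finset.mem_filter, Finset.mem_Icc] at ht
              simp only [Finset.mem_coe, Finset.mem_product, Finset.mem_univ, Finset.mem_range, true_and]
              obtain ⟨hle, hlt⟩ := hept t ht.1.1
              calc visits sa t (sa t) ≤ visits sa (ep t) (sa t) + (t - ep t) :=
                    visits_le_add sa hle _
                _ < 2 * τ := by omega
            · intro x hx y hy hxy
              simp only [Finset.mem_coe, Finset.mem_filter, Finset.mem_Icc] at hx hy
              by_contra hne
              have hpe : sa x = sa y := congrArg Prod.fst hxy
              have hve : visits sa x (sa x) = visits sa y (sa y) :=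
                congrArg Prod.snd hxy
              rcases lt_or_gt_of_ne hne with h | h
              · rw [hpe] at hve
                exact absurd hve (Nat.ne_of_lt (visits_lt_of_lt sa hx.1.1 h hpe))
              · rw [← hpe] at hve
                exact absurd hve.symm (Nat.ne_of_lt (visits_lt_of_lt sa hy.1.1 h hpe.symm))
          exact_mod_cast hcard
  have bound2 : ∑ t ∈ (Finset.Icc 1 T).filter (fun t => ¬ visits sa (ep t) (sa t) < τ), F t
      ≤ Real.sqrt (2 * c * L) * (2 * Real.sqrt ((C : ℝ) * T)) := by
    have per : ∀ t ∈ (Finset.Icc 1 T).filter (fun t => ¬ visits sa (ep t) (sa t) < τ),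
        F t ≤ Real.sqrt (2 * c * L) * ((1:ℝ) / Real.sqrt (visits sa t (sa t) + 1)) := by
      intro t ht
      simp only [Finset.mem_filter, Finset.mem_Icc, not_lt] at ht
      obtain ⟨⟨ht1, ht2⟩, hτle⟩ := ht
      set vK := visits sa (ep t) (sa t) with hvK
      set v := visits sa t (sa t) with hv
      have hvK1 : 1 ≤ vK := hτ.trans_le hτle
      have hmax : max 1 vK = vK := max_eq_right hvK1
      obtain ⟨hle, hlt⟩ := hept t ht1
      have hkey : (v : ℝ) + 1 ≤ 2 * vK := by
        have : v ≤ vK + (t - ep t) := visits_le_add sa hle _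
        have : v + 1 ≤ 2 * vK := by omega
        exact_mod_cast this
      have hvKpos : (0:ℝ) < vK := by exact_mod_cast hvK1
      have hvpos : (0:ℝ) < (v:ℝ) + 1 := by positivity
      calc F t ≤ Real.sqrt (c * L / (max 1 vK : ℕ)) := min_le_left _ _
        _ = Real.sqrt (c * L / vK) := by rw [hmax]
        _ ≤ Real.sqrt (2 * c * L / ((v:ℝ) + 1)) := by
            apply Real.sqrt_le_sqrt
            rw [div_le_div_iff₀ hvKpos hvpos]
            nlinarith
        _ = Real.sqrt (2 * c * L) * ((1:ℝ) / Real.sqrt ((v:ℝ) + 1)) := by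
            rw [div_eq_mul_inv, Real.sqrt_mul (by positivity), Real.sqrt_inv, one_div]
    calc _ ≤ ∑ t ∈ (Finset.Icc 1 T).filter (fun t => ¬ visits sa (ep t) (sa t) < τ),
          Real.sqrt (2 * c * L) * ((1:ℝ) / Real.sqrt (visits sa t (sa t) + 1)) :=
        Finset.sum_le_sum per
      _ = Real.sqrt (2 * c * L) * ∑ t ∈ (Finset.Icc 1 T).filter
            (fun t => ¬ visits sa (ep t) (sa t) < τ),
          (1:ℝ) / Real.sqrt (visits sa t (sa t) + 1) := by rw [Finset.mul_sum]
      _ ≤ Real.sqrt (2 * c * L) * ∑ t ∈ Finset.Icc 1 T,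
          (1:ℝ) / Real.sqrt (visits sa t (sa t) + 1) :=
          mul_le_mul_of_nonneg_left
            (Finset.sum_le_sum_of_subset_of_nonneg (Finset.filter_subset _ _)
              (fun t _ _ => by positivity)) (Real.sqrt_nonneg _)
      _ ≤ Real.sqrt (2 * c * L) * (2 * Real.sqrt ((C:ℝ) * T)) := by
          refine mul_le_mul_of_nonneg_left ?_ (Real.sqrt_nonneg _)
          refine (sum_inv_sqrt_visits sa T).trans (le_of_eq ?_)
          rw [hC]; push_cast; ring_nf
  calc _ ≤ ((C * (2 * τ) : ℕ) : ℝ)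
        + Real.sqrt (2 * c * L) * (2 * Real.sqrt ((C : ℝ) * T)) :=
        add_le_add bound1 bound2
    _ = 2 * τ * Fintype.card S * Fintype.card A
        + 2 * Real.sqrt (2 * c * L * Fintype.card S * Fintype.card A * (m * τ)) := by
        have e1 : Real.sqrt (2*c*L) * (2 * Real.sqrt ((C:ℝ) * T))
            = 2 * Real.sqrt ((2*c*L) * ((C:ℝ) * T)) := by
          rw [Real.sqrt_mul (show (0:ℝ) ≤ 2*c*L by positivity) ((C:ℝ)*(T:ℝ))]; ring
        have e2 : (2:ℝ)*c*L * ((C:ℝ) * T)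
            = 2 * c * L * Fintype.card S * Fintype.card A * ((m:ℝ) * (τ:ℝ)) := by
          rw [hC, hT]; push_cast; ring
        rw [e1, e2]
        congr 1
        rw [hC]; push_cast; ring
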